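/- The Lobachevsky function Λ(θ) = −∫₀^θ log|2 sin t| dt is odd and periodic with period π: for all real θ, Λ(−θ) = −Λ(θ) and Λ(θ + π) = Λ(θ). -/

import Mathlib

open Real MeasureTheory intervalIntegral

/-- The Lobachevsky function `Λ(θ) = −∫₀^θ log|2 sin t| dt`. -/
noncomputable def lobachevsky (θ : ℝ) : ℝ :=
  -∫ t in (0 : ℝ)..θ, Real.log |2 * Real.sin t|

namespace LobAux

noncomputable def f : ℝ → ℝ := fun t => Real.log |2 * Real.sin t|

lemma lob_eq (θ : ℝ) : lobachevsky θ = -∫ t in (0 : ℝ)..θ, f t := rfl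

lemma f_even (t : ℝ) : f (-t) = f t := by
  simp [f, Real.sin_neg, mul_neg, abs_neg]

lemma f_per : Function.Periodic f π := by
  intro t
  simp [f, Real.sin_add_pi, mul_neg, abs_neg]

lemma f_meas : Measurable f :=
  Real.measurable_log.comp
    (continuous_abs.comp (continuous_const.mul Real.continuous_sin)).measurable

lemma log_intble : IntervalIntegrable Real.log volume 0 1 := by
  have h : IntervalIntegrable (fun x : ℝ => -Real.log x) volume 0 1 := by
    apply intervalIntegral.intervalIntegrable_deriv_of_nonneg
      (g := fun x : ℝ => x - x * Real.log x)
    · exact (continuous_id.sub Real.continuous_mul_log).continuousOn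
    · intro x hx
      rw [show min (0:ℝ) 1 = 0 by norm_num, show max (0:ℝ) 1 = 1 by norm_num] at hx
      have h1 : HasDerivAt (fun x : ℝ => x - x * Real.log x) (1 - (Real.log x + 1)) x :=
        (hasDerivAt_id x).sub (Real.hasDerivAt_mul_log (ne_of_gt hx.1))
      convert h1 using 1
      ring
    · intro x hx
      rw [show min (0:ℝ) 1 = 0 by norm_num, show max (0:ℝ) 1 = 1 by norm_num] at hx
      simpa using Real.log_nonpos hx.1.le hx.2.le
  have h2 : Real.log = (-fun x : ℝ => -Real.log x) := by funext x; simp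
  rw [h2]; exact h.neg

lemma log_intble2 : IntervalIntegrable Real.log volume 0 2 := by
  refine log_intble.trans (intervalIntegrable_log ?_)
  rw [Set.uIcc_of_le (by norm_num : (1:ℝ) ≤ 2)]
  intro h
  exact absurd h.1 (by norm_num)

lemma f_int_half : IntervalIntegrable f volume 0 (π / 2) := by
  have hπ2 : π / 2 ≤ 2 := by nlinarith [Real.pi_le_four]
  have hg : IntervalIntegrable (fun x : ℝ => |Real.log x| + 2) volume 0 (π / 2) := by
    have h1 : IntervalIntegrable (fun x : ℝ => |Real.log x|) volume 0 (π / 2) := by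
      apply log_intble2.abs.mono_set
      rw [Set.uIcc_of_le (by positivity : (0:ℝ) ≤ π / 2),
        Set.uIcc_of_le (by norm_num : (0:ℝ) ≤ 2)]
      exact Set.Icc_subset_Icc le_rfl hπ2
    exact h1.add intervalIntegrable_const
  apply hg.mono_fun' (f_meas.aestronglyMeasurable.restrict)
  rw [Set.uIoc_of_le (by positivity : (0:ℝ) ≤ π / 2)]
  refine (ae_restrict_iff' measurableSet_Ioc).mpr (ae_of_all _ ?_)
  intro x hx
  have hx0 : 0 < x := hx.1
  have hxle : x ≤ π / 2 := hx.2
  have hs : 0 < Real.sin x :=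
    Real.sin_pos_of_pos_of_lt_pi hx0 (lt_of_le_of_lt hxle (by linarith [Real.pi_pos]))
  have habs : |2 * Real.sin x| = 2 * Real.sin x := abs_of_pos (by positivity)
  have hup : Real.log (2 * Real.sin x) ≤ Real.log (2 * x) :=
    Real.log_le_log (by positivity) (by nlinarith [Real.sin_lt hx0])
  have hlow : Real.log (4 / π * x) ≤ Real.log (2 * Real.sin x) := by
    apply Real.log_le_log (by positivity)
    have := Real.mul_le_sin hx0.le hxle
    have hpi := Real.pi_pos
    rw [div_mul_eq_mul_div, div_le_iff₀ hpi] at *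
    nlinarith
  have e1 : Real.log (2 * x) = Real.log 2 + Real.log x :=
    Real.log_mul (by norm_num) (ne_of_gt hx0)
  have e2 : Real.log (4 / π * x) = Real.log (4 / π) + Real.log x :=
    Real.log_mul (by positivity) (ne_of_gt hx0)
  have h2 : Real.log 2 ≤ 1 := by
    have := Real.log_le_sub_one_of_pos (by norm_num : (0:ℝ) < 2)
    linarith
  have h4 : 0 ≤ Real.log (4 / π) := by
    apply Real.log_nonneg
    rw [le_div_iff₀ Real.pi_pos]
    linarith [Real.pi_le_four]
  simp only [f, habs, Real.norm_eq_abs]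
  rw [abs_le]
  constructor
  · have := neg_abs_le (Real.log x)
    nlinarith [abs_nonneg (Real.log x)]
  · have := le_abs_self (Real.log x)
    nlinarith [abs_nonneg (Real.log x)]

lemma f_pi_sub (x : ℝ) : f (π - x) = f x := by
  simp [f, Real.sin_pi_sub]

lemma f_int_pi : IntervalIntegrable f volume 0 π := by
  have h2 : IntervalIntegrable f volume (π / 2) π := by
    have h := (f_int_half.comp_sub_left π).symm
    have e : (fun x => f (π - x)) = f := funext f_pi_sub
    rw [e] at h
    convert h using 1 <;> ring
  exact f_int_half.trans h2

lemma f_int (a b : ℝ) : IntervalIntegrable f volume a b := by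
  have hstep : ∀ n : ℤ, IntervalIntegrable f volume (n * π) (n * π + π) := by
    intro n
    have h := f_int_pi.comp_sub_right (n * π)
    have e : (fun x => f (x - n * π)) = f := funext fun x => f_per.sub_int_mul_eq n
    rw [e] at h
    convert h using 1 <;> ring
  have key : ∀ n : ℕ, IntervalIntegrable f volume (-(n * π)) (n * π) := by
    intro n
    induction n with
    | zero => simp
    | succ m ih =>
      have hL : IntervalIntegrable f volume (-((m + 1 : ℕ) * π)) (-(m * π)) := by
        have := hstep (-(m + 1))
        convert this using 1 <;> push_cast <;> ring
      have hR : IntervalIntegrable f volume ((m : ℕ) * π) ((m + 1 : ℕ) * π) := by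
        have := hstep m
        convert this using 1 <;> push_cast <;> ring
      exact (hL.trans ih).trans hR
  obtain ⟨n, hn⟩ := exists_nat_ge (max |a| |b| / π)
  have hπ := Real.pi_pos
  have hmax : max |a| |b| ≤ n * π := by
    rw [div_le_iff₀ hπ] at hn
    exact hn
  have ha : |a| ≤ n * π := le_trans (le_max_left _ _) hmax
  have hb : |b| ≤ n * π := le_trans (le_max_right _ _) hmax
  apply (key n).mono_set
  apply Set.uIcc_subset_uIcc
  · exact Set.mem_uIcc.mpr (Or.inl ⟨(abs_le.mp ha).1, (abs_le.mp ha).2⟩)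
  · exact Set.mem_uIcc.mpr (Or.inl ⟨(abs_le.mp hb).1, (abs_le.mp hb).2⟩)

lemma half_symm : ∫ x in (0:ℝ)..(π / 2), f (π / 2 - x) = ∫ x in (0:ℝ)..(π / 2), f x := by
  rw [intervalIntegral.integral_comp_sub_left f (π / 2)]
  congr 1 <;> ring

lemma A_eq : ∫ x in (0:ℝ)..π, f x = 2 * ∫ x in (0:ℝ)..(π / 2), f x := by
  have h1 : ∫ x in (π / 2:ℝ)..π, f x = ∫ x in (0:ℝ)..(π / 2), f x := by
    calc ∫ x in (π / 2:ℝ)..π, f x = ∫ x in (π / 2:ℝ)..π, f (π - x) := by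
          simp only [f_pi_sub]
      _ = ∫ x in (π - π:ℝ)..(π - π / 2), f x := intervalIntegral.integral_comp_sub_left f π
      _ = ∫ x in (0:ℝ)..(π / 2), f x := by congr 1 <;> ring
  have h2 : IntervalIntegrable f volume (π / 2) π := f_int _ _
  rw [← intervalIntegral.integral_add_adjacent_intervals f_int_half h2, h1]
  ring

lemma doubling : ∫ x in (0:ℝ)..(π / 2), f (2 * x) = 2⁻¹ * ∫ x in (0:ℝ)..π, f x := by
  have h := intervalIntegral.integral_comp_mul_left (a := 0) (b := π / 2) f
    (two_ne_zero (α := ℝ))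
  rw [h]
  rw [show (2:ℝ) * 0 = 0 by ring, show (2:ℝ) * (π / 2) = π by ring, smul_eq_mul]

lemma sum_eq : ∫ x in (0:ℝ)..(π / 2), f (2 * x)
    = (∫ x in (0:ℝ)..(π / 2), f x) + ∫ x in (0:ℝ)..(π / 2), f (π / 2 - x) := by
  have hg_int : IntervalIntegrable (fun x => f (π / 2 - x)) volume 0 (π / 2) := by
    have h := (f_int_half.comp_sub_left (π / 2)).symm
    convert h using 1 <;> ring
  rw [← intervalIntegral.integral_add f_int_half hg_int]
  apply intervalIntegral.integral_congr_ae
  have hae : ∀ᵐ x : ℝ, x ≠ π / 2 := by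
    refine ae_iff.mpr ?_
    have : {x : ℝ | ¬ x ≠ π / 2} = {π / 2} := by ext y; simp
    rw [this]
    exact Real.volume_singleton
  filter_upwards [hae] with x hxne hmem
  rw [Set.uIoc_of_le (by positivity : (0:ℝ) ≤ π / 2)] at hmem
  have hx0 : 0 < x := hmem.1
  have hxlt : x < π / 2 := lt_of_le_of_ne hmem.2 hxne
  have hs : 0 < Real.sin x :=
    Real.sin_pos_of_pos_of_lt_pi hx0 (by linarith [Real.pi_pos])
  have hc : 0 < Real.cos x := Real.cos_pos_of_mem_Ioo ⟨by linarith [Real.pi_pos], hxlt⟩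
  have hmul : (2:ℝ) * Real.sin (2 * x) = (2 * Real.sin x) * (2 * Real.cos x) := by
    rw [Real.sin_two_mul]; ring
  simp only [f]
  rw [hmul, abs_mul, Real.log_mul (abs_ne_zero.mpr (by positivity))
    (abs_ne_zero.mpr (by positivity)), Real.sin_pi_div_two_sub]

lemma integral_pi_zero : ∫ x in (0:ℝ)..π, f x = 0 := by
  have h1 := A_eq
  have h2 := sum_eq
  have h3 := doubling
  rw [half_symm] at h2
  rw [h2, h1] at h3
  set A := ∫ x in (0:ℝ)..(π / 2), f x
  rw [h1]
  linarith

end LobAux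

/-- `Λ` is odd and `π`-periodic. -/
theorem lobachevsky_odd_periodic (θ : ℝ) :
    lobachevsky (-θ) = -lobachevsky θ ∧ lobachevsky (θ + π) = lobachevsky θ := by
  constructor
  · rw [LobAux.lob_eq, LobAux.lob_eq, neg_neg]
    have : ∫ t in (0:ℝ)..(-θ), LobAux.f t = -∫ t in (0:ℝ)..θ, LobAux.f t := by
      calc ∫ t in (0:ℝ)..(-θ), LobAux.f t = ∫ t in (0:ℝ)..(-θ), LobAux.f (-t) := by
            simp only [LobAux.f_even]
        _ = ∫ t in (-(-θ):ℝ)..(-0:ℝ), LobAux.f t := intervalIntegral.integral_comp_neg LobAux.f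
        _ = ∫ t in (θ:ℝ)..(0:ℝ), LobAux.f t := by rw [neg_neg, neg_zero]
        _ = -∫ t in (0:ℝ)..θ, LobAux.f t := intervalIntegral.integral_symm _ _
    rw [this, neg_neg]
  · rw [LobAux.lob_eq, LobAux.lob_eq]
    have h := LobAux.f_per.intervalIntegral_add_eq_add 0 θ LobAux.f_int
    rw [h, zero_add, LobAux.integral_pi_zero, add_zero]
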